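/- Fix a prime p and m > q ≥ 0. The diagonal map e : E(l,m) → E(l,m+1) defined by e(x) = C·(x,…,x) (p copies, with C = p^{-1/2} so that e is an isometry) sends E(l,m) isomorphically (as a G_m-space, where G_m = ZMod(p^m) is identified with the quotient G_{m+1}/(p^m·G_{m+1})) onto the set E^m(l,m+1) of p^m-periodic points of E(l,m+1), carries E^q(l,m) onto E^q(l,m+1), and restricts to a G_m-equivariant isometric bijection from K(l,m,q) onto the set of p^m-periodic points of K(l,m+1,q). -/

import Mathlib

open Set Metric

/-- `E(l,n) = (ℝ^l)^{ZMod n}` as a Euclidean space. -/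
abbrev Esp (n l : ℕ) [NeZero n] : Type := EuclideanSpace ℝ (ZMod n × Fin l)

/-- The shift action of `ZMod n` on `E(l,n)`. -/
def shiftE {n l : ℕ} [NeZero n] (h : ZMod n) (y : Esp n l) : Esp n l :=
  WithLp.toLp 2 (fun gi => y (gi.1 + h, gi.2))

/-- The linear subspace of `c`-periodic points of `E(l,n)`. -/
def perSub (n l : ℕ) [NeZero n] (c : ZMod n) : Submodule ℝ (Esp n l) where
  carrier := {y | ∀ gi : ZMod n × Fin l, y (gi.1 + c, gi.2) = y gi}
  add_mem' := by
    intro a b ha hb gi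
    show a (gi.1 + c, gi.2) + b (gi.1 + c, gi.2) = a gi + b gi
    rw [ha gi, hb gi]
  zero_mem' := by intro gi; rfl
  smul_mem' := by
    intro r a ha gi
    show r * a (gi.1 + c, gi.2) = r * a gi
    rw [ha gi]

/-- `K(l,n,c)`: the unit sphere in the orthogonal complement of the subspace of
`c`-periodic points. -/
def Kset (n l : ℕ) [NeZero n] (c : ZMod n) : Set (Esp n l) :=
  {y | y ∈ (perSub n l c)ᗮ ∧ ‖y‖ = 1}

/-- The diagonal map `e : E(l,m) → E(l,m+1)`, `e(x) = C·(x,…,x)` with `C = p^{-1/2}`,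
written via reduction `ZMod (p^(m+1)) → ZMod (p^m)`. -/
noncomputable def diagMap (p m l : ℕ) [NeZero (p ^ m)] [NeZero (p ^ (m + 1))]
    (hdvd : p ^ m ∣ p ^ (m + 1)) (y : Esp (p ^ m) l) : Esp (p ^ (m + 1)) l :=
  WithLp.toLp 2 (fun gi => (Real.sqrt p)⁻¹ * y (ZMod.castHom hdvd (ZMod (p ^ m)) gi.1, gi.2))

set_option linter.unusedSectionVars false

lemma pPos (p k : ℕ) [NeZero (p ^ (k + 1))] : 0 < p := by
  rcases Nat.eq_zero_or_pos p with h | h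
  · exact absurd (by simp [h] : p ^ (k + 1) = 0) (NeZero.ne _)
  · exact h

section aux
variable (p m l : ℕ) [NeZero (p ^ m)] [NeZero (p ^ (m + 1))]

lemma cast_eq_valc (hdvd : p ^ m ∣ p ^ (m + 1)) (g : ZMod (p ^ (m + 1))) :
    ZMod.castHom hdvd (ZMod (p ^ m)) g = ((g.val : ℕ) : ZMod (p ^ m)) := by
  conv_lhs => rw [← ZMod.natCast_rightInverse g]
  rw [map_natCast]



def chi : ZMod (p ^ (m + 1)) ≃ ZMod (p ^ m) × Fin p where
  toFun g := ((g.val : ZMod (p ^ m)),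
    ⟨g.val / p ^ m, by
      refine Nat.div_lt_iff_lt_mul (Nat.pow_pos (pPos p m)) |>.mpr ?_
      rw [← pow_succ']; exact ZMod.val_lt g⟩)
  invFun bj := ((bj.1.val + bj.2.1 * p ^ m : ℕ) : ZMod (p ^ (m + 1)))
  left_inv g := by
    have : (g.val : ZMod (p ^ m)).val = g.val % p ^ m := ZMod.val_natCast _ _
    simp only [this]
    rw [Nat.mod_add_div']
    exact ZMod.natCast_rightInverse g
  right_inv := by
    rintro ⟨b, j⟩
    have hlt : b.val + j.1 * p ^ m < p ^ (m + 1) := by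
      have h1 : b.val < p ^ m := ZMod.val_lt b
      have h2 : j.1 + 1 ≤ p := j.2
      calc b.val + j.1 * p ^ m < p ^ m + j.1 * p ^ m := by omega
        _ = (j.1 + 1) * p ^ m := by ring
        _ ≤ p * p ^ m := Nat.mul_le_mul_right _ h2
        _ = p ^ (m + 1) := by rw [pow_succ]; ring
    have hval : ((b.val + j.1 * p ^ m : ℕ) : ZMod (p ^ (m + 1))).val
        = b.val + j.1 * p ^ m := ZMod.val_natCast_of_lt hlt
    ext
    · show ((((b.val + j.1 * p ^ m : ℕ) : ZMod (p ^ (m + 1))).val : ℕ) : ZMod (p^m)) = b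
      rw [hval, Nat.cast_add, Nat.cast_mul, ZMod.natCast_self, mul_zero, add_zero]
      exact ZMod.natCast_rightInverse b
    · show (((b.val + j.1 * p ^ m : ℕ) : ZMod (p ^ (m + 1))).val) / p ^ m = j.1
      rw [hval, Nat.add_mul_div_right _ _ (Nat.pow_pos (pPos p m)),
        Nat.div_eq_of_lt (ZMod.val_lt b)]
      simp

lemma cast_chi_symm (hdvd : p ^ m ∣ p ^ (m + 1)) (bj : ZMod (p ^ m) × Fin p) :
    ZMod.castHom hdvd (ZMod (p ^ m)) ((chi p m).symm bj) = bj.1 := by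
  have := congrArg Prod.fst ((chi p m).right_inv bj)
  rw [cast_eq_valc]
  exact this

lemma sum_cast (hdvd : p ^ m ∣ p ^ (m + 1)) (F : ZMod (p ^ m) → ℝ) :
    ∑ g : ZMod (p ^ (m + 1)), F (ZMod.castHom hdvd (ZMod (p ^ m)) g)
      = p * ∑ b : ZMod (p ^ m), F b := by
  rw [← Equiv.sum_comp (chi p m).symm (fun g => F (ZMod.castHom hdvd (ZMod (p ^ m)) g))]
  simp only [cast_chi_symm]
  rw [Fintype.sum_prod_type]
  simp only [Finset.sum_const, Finset.card_univ, Fintype.card_fin, nsmul_eq_mul]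
  rw [Finset.mul_sum]

end aux

section aux2
variable (p m l : ℕ) [NeZero (p ^ m)] [NeZero (p ^ (m + 1))]

open scoped RealInnerProductSpace

lemma sum_cast_pair (hdvd : p ^ m ∣ p ^ (m + 1)) (F : ZMod (p ^ m) × Fin l → ℝ) :
    ∑ gi : ZMod (p ^ (m + 1)) × Fin l, F (ZMod.castHom hdvd (ZMod (p ^ m)) gi.1, gi.2)
      = p * ∑ bi : ZMod (p ^ m) × Fin l, F bi := by
  rw [Fintype.sum_prod_type, Fintype.sum_prod_type]
  rw [show (∑ g : ZMod (p ^ (m+1)), ∑ i : Fin l, F (ZMod.castHom hdvd (ZMod (p^m)) g, i))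
      = ∑ g : ZMod (p ^ (m+1)), (fun b => ∑ i : Fin l, F (b, i)) (ZMod.castHom hdvd (ZMod (p^m)) g)
      from rfl]
  exact sum_cast p m hdvd (fun b => ∑ i : Fin l, F (b, i))

lemma per_nsmul {n l : ℕ} [NeZero n] {c : ZMod n} {y : Esp n l}
    (hy : y ∈ perSub n l c) (k : ℕ) (g : ZMod n) (i : Fin l) :
    y (g + (k : ZMod n) * c, i) = y (g, i) := by
  induction k with
  | zero => rw [Nat.cast_zero, zero_mul, add_zero]
  | succ k ih =>
    have h1 : ((k + 1 : ℕ) : ZMod n) * c = (k : ZMod n) * c + c := by push_cast; ring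
    rw [h1, ← add_assoc]
    rw [hy (g + (k : ZMod n) * c, i)]
    exact ih

lemma per_of_cast_eq (hdvd : p ^ m ∣ p ^ (m + 1)) {y : Esp (p ^ (m + 1)) l}
    (hy : y ∈ perSub (p ^ (m + 1)) l ((p ^ m : ℕ) : ZMod (p ^ (m + 1))))
    {a b : ZMod (p ^ (m + 1))}
    (hab : ZMod.castHom hdvd (ZMod (p ^ m)) a = ZMod.castHom hdvd (ZMod (p ^ m)) b)
    (i : Fin l) : y (a, i) = y (b, i) := by
  have h1 : ZMod.castHom hdvd (ZMod (p ^ m)) (a - b) = 0 := by rw [map_sub, hab, sub_self]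
  rw [cast_eq_valc] at h1
  obtain ⟨k, hk⟩ := (ZMod.natCast_eq_zero_iff _ _).mp h1
  have h2 : a = b + (k : ZMod (p ^ (m + 1))) * ((p ^ m : ℕ) : ZMod (p ^ (m + 1))) := by
    have h3 : ((a - b).val : ZMod (p ^ (m + 1))) = a - b := ZMod.natCast_rightInverse _
    rw [hk] at h3
    push_cast at h3
    rw [show ((k : ZMod (p ^ (m+1))) * ((p ^ m : ℕ) : ZMod (p ^ (m+1)))) =
      ((p : ZMod (p ^ (m+1))) ^ m * (k : ZMod (p ^ (m+1)))) by push_cast; ring, h3]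
    ring
  rw [h2, per_nsmul hy k b i]

lemma diagMap_sub (hdvd : p ^ m ∣ p ^ (m + 1)) (x y : Esp (p ^ m) l) :
    diagMap p m l hdvd x - diagMap p m l hdvd y = diagMap p m l hdvd (x - y) := by
  ext gi
  show diagMap p m l hdvd x gi - diagMap p m l hdvd y gi = _
  simp only [diagMap]
  rw [← mul_sub]
  rfl

lemma inner_diagMap (hp : p.Prime) (hdvd : p ^ m ∣ p ^ (m + 1)) (x y : Esp (p ^ m) l) :
    ⟪diagMap p m l hdvd x, diagMap p m l hdvd y⟫ = ⟪x, y⟫ := by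
  rw [real_inner_comm, real_inner_comm y x]
  rw [PiLp.inner_apply, PiLp.inner_apply]
  simp only [RCLike.inner_apply, starRingEnd_apply, star_trivial, diagMap]
  have hpR : (0:ℝ) < p := by exact_mod_cast hp.pos
  have key := sum_cast_pair p m l hdvd
    (fun bi => (Real.sqrt p)⁻¹ * x bi * ((Real.sqrt p)⁻¹ * y bi))
  rw [show (∑ gi : ZMod (p ^ (m+1)) × Fin l,
      (Real.sqrt p)⁻¹ * x (ZMod.castHom hdvd (ZMod (p^m)) gi.1, gi.2) *
      ((Real.sqrt p)⁻¹ * y (ZMod.castHom hdvd (ZMod (p^m)) gi.1, gi.2)))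
      = ∑ gi : ZMod (p ^ (m+1)) × Fin l,
      (fun bi => (Real.sqrt p)⁻¹ * x bi * ((Real.sqrt p)⁻¹ * y bi))
        (ZMod.castHom hdvd (ZMod (p^m)) gi.1, gi.2) from rfl, key]
  rw [Finset.mul_sum]
  refine Finset.sum_congr rfl fun bi _ => ?_
  have hs : Real.sqrt p * Real.sqrt p = p := Real.mul_self_sqrt (le_of_lt hpR)
  have hs0 : Real.sqrt p ≠ 0 := by positivity
  field_simp
  rw [sq, hs]
end aux2

section aux3
variable (p m l : ℕ) [NeZero (p ^ m)] [NeZero (p ^ (m + 1))]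
open scoped RealInnerProductSpace

lemma norm_diagMap (hp : p.Prime) (hdvd : p ^ m ∣ p ^ (m + 1)) (x : Esp (p ^ m) l) :
    ‖diagMap p m l hdvd x‖ = ‖x‖ := by
  have h := inner_diagMap p m l hp hdvd x x
  rw [real_inner_self_eq_norm_sq, real_inner_self_eq_norm_sq] at h
  nlinarith [norm_nonneg (diagMap p m l hdvd x), norm_nonneg x]

lemma isometry_diagMap (hp : p.Prime) (hdvd : p ^ m ∣ p ^ (m + 1)) :
    Isometry (diagMap p m l hdvd) := by
  refine Isometry.of_dist_eq fun x y => ?_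
  rw [dist_eq_norm, dist_eq_norm, diagMap_sub, norm_diagMap p m l hp hdvd]

noncomputable def einv (y : Esp (p ^ (m + 1)) l) : Esp (p ^ m) l :=
  WithLp.toLp 2 (fun bi => Real.sqrt p * y ((bi.1.val : ZMod (p ^ (m + 1))), bi.2))

lemma diagMap_einv (hp : p.Prime) (hdvd : p ^ m ∣ p ^ (m + 1)) {y : Esp (p ^ (m + 1)) l}
    (hy : y ∈ perSub (p ^ (m + 1)) l ((p ^ m : ℕ) : ZMod (p ^ (m + 1)))) :
    diagMap p m l hdvd (einv p m l y) = y := by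
  ext gi
  obtain ⟨g, i⟩ := gi
  show (Real.sqrt p)⁻¹ * (Real.sqrt p *
    y ((((ZMod.castHom hdvd (ZMod (p ^ m))) g).val : ZMod (p ^ (m + 1))), i)) = y (g, i)
  have hs0 : Real.sqrt p ≠ 0 := by
    have : (0:ℝ) < p := by exact_mod_cast hp.pos
    positivity
  rw [inv_mul_cancel_left₀ hs0]
  refine per_of_cast_eq p m l hdvd hy ?_ i
  rw [map_natCast, cast_eq_valc]
  exact (ZMod.natCast_rightInverse _)

-- e x is p^m periodic
lemma diagMap_mem_perm (hdvd : p ^ m ∣ p ^ (m + 1)) (x : Esp (p ^ m) l) :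
    diagMap p m l hdvd x ∈ perSub (p ^ (m + 1)) l ((p ^ m : ℕ) : ZMod (p ^ (m + 1))) := by
  intro gi
  show (Real.sqrt p)⁻¹ * x (ZMod.castHom hdvd (ZMod (p^m)) (gi.1 + _), gi.2) = _
  rw [map_add, map_natCast, ZMod.natCast_self, add_zero]
  rfl

lemma range_diagMap (hp : p.Prime) (hdvd : p ^ m ∣ p ^ (m + 1)) :
    Set.range (diagMap p m l hdvd)
      = (perSub (p ^ (m + 1)) l ((p ^ m : ℕ) : ZMod (p ^ (m + 1))) :
          Set (Esp (p ^ (m + 1)) l)) := by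
  ext y
  constructor
  · rintro ⟨x, rfl⟩
    exact diagMap_mem_perm p m l hdvd x
  · intro hy
    exact ⟨einv p m l y, diagMap_einv p m l hp hdvd hy⟩

-- q-periodicity transfer
lemma perq_to_perm {q : ℕ} (hq : q ≤ m) {y : Esp (p ^ (m + 1)) l}
    (hy : y ∈ perSub (p ^ (m + 1)) l ((p ^ q : ℕ) : ZMod (p ^ (m + 1)))) :
    y ∈ perSub (p ^ (m + 1)) l ((p ^ m : ℕ) : ZMod (p ^ (m + 1))) := by
  intro gi
  have hpm : (p ^ m : ℕ) = p ^ (m - q) * p ^ q := by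
    rw [← pow_add, Nat.sub_add_cancel hq]
  have : ((p ^ m : ℕ) : ZMod (p ^ (m + 1)))
      = ((p ^ (m - q) : ℕ) : ZMod (p ^ (m + 1))) * ((p ^ q : ℕ) : ZMod (p ^ (m + 1))) := by
    rw [hpm]; push_cast; ring
  rw [this]
  exact per_nsmul hy (p ^ (m - q)) gi.1 gi.2

lemma image_perq (hp : p.Prime) {q : ℕ} (hq : q ≤ m) (hdvd : p ^ m ∣ p ^ (m + 1)) :
    diagMap p m l hdvd '' (perSub (p ^ m) l ((p ^ q : ℕ) : ZMod (p ^ m)) : Set (Esp (p ^ m) l))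
      = (perSub (p ^ (m + 1)) l ((p ^ q : ℕ) : ZMod (p ^ (m + 1))) :
          Set (Esp (p ^ (m + 1)) l)) := by
  ext y
  constructor
  · rintro ⟨x, hx, rfl⟩
    intro gi
    show (Real.sqrt p)⁻¹ * x (ZMod.castHom hdvd (ZMod (p^m)) (gi.1 + _), gi.2) = _
    rw [map_add, map_natCast]
    rw [hx (ZMod.castHom hdvd (ZMod (p^m)) gi.1, gi.2)]
    rfl
  · intro hy
    have hym := perq_to_perm p m l hq hy
    refine ⟨einv p m l y, ?_, diagMap_einv p m l hp hdvd hym⟩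
    intro bi
    show Real.sqrt p * y ((((bi.1 + _ : ZMod (p^m))).val : ZMod (p ^ (m + 1))), bi.2)
      = Real.sqrt p * y (((bi.1.val : ZMod (p ^ (m+1)))), bi.2)
    congr 1
    have h1 : y (((bi.1.val : ZMod (p ^ (m+1)))) + ((p ^ q : ℕ) : ZMod (p ^ (m + 1))), bi.2)
        = y (((bi.1.val : ZMod (p ^ (m+1)))), bi.2) :=
      hy (((bi.1.val : ZMod (p ^ (m+1)))), bi.2)
    rw [← h1]
    refine per_of_cast_eq p m l hdvd hym ?_ bi.2
    simp only [map_add, map_natCast]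
    rw [ZMod.natCast_rightInverse (bi.1 + ((p ^ q : ℕ) : ZMod (p ^ m))),
      ZMod.natCast_rightInverse bi.1]
end aux3

section aux4
variable (p m l : ℕ) [NeZero (p ^ m)] [NeZero (p ^ (m + 1))]
open scoped RealInnerProductSpace

lemma mem_orth_iff (hp : p.Prime) {q : ℕ} (hq : q ≤ m) (hdvd : p ^ m ∣ p ^ (m + 1))
    (x : Esp (p ^ m) l) :
    x ∈ (perSub (p ^ m) l ((p ^ q : ℕ) : ZMod (p ^ m)))ᗮ ↔
      diagMap p m l hdvd x ∈ (perSub (p ^ (m + 1)) l ((p ^ q : ℕ) : ZMod (p ^ (m + 1))))ᗮ := by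
  constructor
  · intro hx
    rw [Submodule.mem_orthogonal]
    intro w hw
    have hw' : w ∈ diagMap p m l hdvd ''
        (perSub (p ^ m) l ((p ^ q : ℕ) : ZMod (p ^ m)) : Set (Esp (p ^ m) l)) := by
      rw [image_perq p m l hp hq hdvd]; exact hw
    obtain ⟨z, hz, rfl⟩ := hw'
    rw [inner_diagMap p m l hp hdvd]
    exact (Submodule.mem_orthogonal _ _).mp hx z hz
  · intro hx
    rw [Submodule.mem_orthogonal]
    intro u hu
    have hu' : diagMap p m l hdvd u ∈
        perSub (p ^ (m + 1)) l ((p ^ q : ℕ) : ZMod (p ^ (m + 1))) := by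
      rw [← SetLike.mem_coe, ← image_perq p m l hp hq hdvd]
      exact Set.mem_image_of_mem _ hu
    rw [← inner_diagMap p m l hp hdvd]
    exact (Submodule.mem_orthogonal _ _).mp hx _ hu'
end aux4


/-- The diagonal map `e : E(l,m) → E(l,m+1)` is an isometry, is equivariant
for the `G_m = G_{m+1}/H` actions, has image exactly the set `E^m(l,m+1)` of
`p^m`-periodic points, carries `E^q(l,m)` onto `E^q(l,m+1)`, and restricts to a
`G_m`-equivariant isometric bijection from `K(l,m,q)` onto the `p^m`-periodic points of
`K(l,m+1,q)`. -/
theorem diagonal_map_onto_periodic_points (p m q l : ℕ) (hp : p.Prime) (hq : q < m)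
    [NeZero (p ^ m)] [NeZero (p ^ (m + 1))] (hdvd : p ^ m ∣ p ^ (m + 1)) :
    letI e := diagMap p m l hdvd
    letI cq : ZMod (p ^ m) := ((p ^ q : ℕ) : ZMod (p ^ m))
    letI cq' : ZMod (p ^ (m + 1)) := ((p ^ q : ℕ) : ZMod (p ^ (m + 1)))
    letI cm' : ZMod (p ^ (m + 1)) := ((p ^ m : ℕ) : ZMod (p ^ (m + 1)))
    Isometry e ∧
    (∀ (h : ZMod (p ^ (m + 1))) (y : Esp (p ^ m) l),
      e (shiftE (ZMod.castHom hdvd (ZMod (p ^ m)) h) y) = shiftE h (e y)) ∧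
    Set.range e = ((perSub (p ^ (m + 1)) l cm' : Set (Esp (p ^ (m + 1)) l))) ∧
    e '' ((perSub (p ^ m) l cq : Set (Esp (p ^ m) l))) =
      ((perSub (p ^ (m + 1)) l cq' : Set (Esp (p ^ (m + 1)) l))) ∧
    Set.BijOn e (Kset (p ^ m) l cq)
      (Kset (p ^ (m + 1)) l cq' ∩ (perSub (p ^ (m + 1)) l cm' : Set (Esp (p ^ (m + 1)) l))) := by
  refine ⟨isometry_diagMap p m l hp hdvd, ?_, range_diagMap p m l hp hdvd,
    image_perq p m l hp hq.le hdvd, ?_, ?_, ?_⟩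
  · intro h y
    ext gi
    show (Real.sqrt p)⁻¹ * y (ZMod.castHom hdvd (ZMod (p ^ m)) gi.1 +
        ZMod.castHom hdvd (ZMod (p ^ m)) h, gi.2)
      = (Real.sqrt p)⁻¹ * y (ZMod.castHom hdvd (ZMod (p ^ m)) (gi.1 + h), gi.2)
    rw [map_add]
  · rintro x ⟨hxo, hxn⟩
    exact ⟨⟨(mem_orth_iff p m l hp hq.le hdvd x).mp hxo,
      by rw [norm_diagMap p m l hp hdvd]; exact hxn⟩,
      diagMap_mem_perm p m l hdvd x⟩
  · exact ((isometry_diagMap p m l hp hdvd).injective).injOn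
  · rintro w ⟨⟨hwo, hwn⟩, hwm⟩
    have hew : diagMap p m l hdvd (einv p m l w) = w := diagMap_einv p m l hp hdvd hwm
    refine ⟨einv p m l w, ⟨?_, ?_⟩, hew⟩
    · refine (mem_orth_iff p m l hp hq.le hdvd _).mpr ?_
      rw [hew]; exact hwo
    · rw [← norm_diagMap p m l hp hdvd, hew]; exact hwn
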